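/- Let H be a Hilbert space, N : H × H → ℝ with growth condition −α̲‖v‖² − C ≤ N(u,v) ≤ ᾱ‖u‖² + C for 0 ≤ ᾱ, α̲ < ½, ᾱ + α̲ < ½, C > 0. Suppose sequences (u_k), (v_k) in H satisfy ½‖u_k‖² − N(u_k, v_{k−1}) ≤ E₁(0, v_{k−1}) + 1 and −½‖v_k‖² − N(u_k, v_k) ≥ E₂(u_k, 0) − 1, where E₁(u,v) = ½‖u‖² − N(u,v), E₂(u,v) = −½‖v‖² − N(u,v). Then there exist constants C₁, C₂ such that ‖u_k‖² ≤ (α̲/(½−ᾱ))‖v_{k−1}‖² + C₁ and ‖v_k‖² ≤ (ᾱ/(½−α̲))‖u_k‖² + C₂ for all k, and consequently the sequences (u_k) and (v_k) are bounded. -/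
import Mathlib


set_option maxHeartbeats 1600000 in
/-- boundedness of the approximation sequences from Step 3. -/
theorem stmt_7 {H : Type*} [NormedAddCommGroup H] [InnerProductSpace ℝ H]
    (N : H → H → ℝ) (α₁ α₂ C : ℝ)
    (hα₁ : 0 ≤ α₁) (hα₂ : 0 ≤ α₂) (hα₁' : α₁ < 1/2) (hα₂' : α₂ < 1/2)
    (hsum : α₁ + α₂ < 1/2) (hC : 0 < C)
    (hgrowth : ∀ u v : H, -α₂ * ‖v‖^2 - C ≤ N u v ∧ N u v ≤ α₁ * ‖u‖^2 + C)
    (u v : ℕ → H)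
    (hu : ∀ k ≥ 1, (1/2) * ‖u k‖^2 - N (u k) (v (k - 1)) ≤
      ((1/2) * ‖(0:H)‖^2 - N 0 (v (k - 1))) + 1)
    (hv : ∀ k ≥ 1, (-(1/2) * ‖(0:H)‖^2 - N (u k) 0) - 1 ≤
      -(1/2) * ‖v k‖^2 - N (u k) (v k)) :
    (∃ C₁ C₂ : ℝ,
      (∀ k ≥ 1, ‖u k‖^2 ≤ (α₂ / (1/2 - α₁)) * ‖v (k - 1)‖^2 + C₁) ∧
      (∀ k ≥ 1, ‖v k‖^2 ≤ (α₁ / (1/2 - α₂)) * ‖u k‖^2 + C₂)) ∧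
    (∃ B : ℝ, ∀ k ≥ 1, ‖u k‖ ≤ B ∧ ‖v k‖ ≤ B) := by
  have hp1 : (0:ℝ) < 1/2 - α₁ := by linarith
  have hp2 : (0:ℝ) < 1/2 - α₂ := by linarith
  set a := α₂ / (1/2 - α₁) with ha
  set b := α₁ / (1/2 - α₂) with hb
  set C₁ := (2*C + 1) / (1/2 - α₁) with hC₁
  set C₂ := (2*C + 1) / (1/2 - α₂) with hC₂
  have haeq : a * (1/2 - α₁) = α₂ := div_mul_cancel₀ _ (ne_of_gt hp1)
  have hbeq : b * (1/2 - α₂) = α₁ := div_mul_cancel₀ _ (ne_of_gt hp2)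
  have hC₁eq : C₁ * (1/2 - α₁) = 2*C + 1 := div_mul_cancel₀ _ (ne_of_gt hp1)
  have hC₂eq : C₂ * (1/2 - α₂) = 2*C + 1 := div_mul_cancel₀ _ (ne_of_gt hp2)
  have ha0 : 0 ≤ a := div_nonneg hα₂ hp1.le
  have hb0 : 0 ≤ b := div_nonneg hα₁ hp2.le
  have ha1 : a < 1 := by rw [ha, div_lt_one hp1]; linarith
  have hb1 : b < 1 := by rw [hb, div_lt_one hp2]; linarith
  have h1 : ∀ k ≥ 1, ‖u k‖^2 ≤ a * ‖v (k - 1)‖^2 + C₁ := by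
    intro k hk
    have h := hu k hk
    simp only [norm_zero] at h
    have g1 := (hgrowth (u k) (v (k-1))).2
    have g2 := (hgrowth 0 (v (k-1))).1
    nlinarith [sq_nonneg ‖v (k-1)‖, sq_nonneg ‖u k‖]
  have h2 : ∀ k ≥ 1, ‖v k‖^2 ≤ b * ‖u k‖^2 + C₂ := by
    intro k hk
    have h := hv k hk
    simp only [norm_zero] at h
    have g1 := (hgrowth (u k) (v k)).1
    have g2 := (hgrowth (u k) 0).2
    nlinarith [sq_nonneg ‖v k‖, sq_nonneg ‖u k‖]
  refine ⟨⟨C₁, C₂, h1, h2⟩, ?_⟩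
  set ρ := a * b with hρ
  have hρ0 : 0 ≤ ρ := mul_nonneg ha0 hb0
  have hρ1 : ρ < 1 := by nlinarith
  set D := b * C₁ + C₂ with hD
  set M := max (‖v 0‖^2) (D / (1 - ρ)) with hM
  have hMD : D / (1 - ρ) ≤ M := le_max_right _ _
  have hM0 : 0 ≤ M := le_trans (sq_nonneg _) (le_max_left _ _)
  have hMkey : ρ * M + D ≤ M := by
    have hd : D ≤ M * (1 - ρ) := (div_le_iff₀ (by linarith : (0:ℝ) < 1 - ρ)).mp hMD
    nlinarith
  have hvM : ∀ k, ‖v k‖^2 ≤ M := by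
    intro k
    induction k with
    | zero => exact le_max_left _ _
    | succ n ih =>
      have hk1 : n + 1 ≥ 1 := Nat.le_add_left 1 n
      have e1 := h1 (n+1) hk1
      have e2 := h2 (n+1) hk1
      simp only [Nat.add_sub_cancel] at e1
      have s1 : b * ‖u (n+1)‖^2 ≤ b * (a * ‖v n‖^2 + C₁) :=
        mul_le_mul_of_nonneg_left e1 hb0
      have s2 : ρ * ‖v n‖^2 ≤ ρ * M := mul_le_mul_of_nonneg_left ih hρ0
      have s3 : b * (a * ‖v n‖^2 + C₁) = ρ * ‖v n‖^2 + b * C₁ := by rw [hρ]; ring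
      linarith
  have huM : ∀ k ≥ 1, ‖u k‖^2 ≤ a * M + C₁ := by
    intro k hk
    have e1 := h1 k hk
    have hvk := hvM (k - 1)
    have : a * ‖v (k-1)‖^2 ≤ a * M := mul_le_mul_of_nonneg_left hvk ha0
    linarith
  set S := max (a * M + C₁) M with hS
  refine ⟨Real.sqrt S, fun k hk => ?_⟩
  constructor
  · have : ‖u k‖^2 ≤ S := le_trans (huM k hk) (le_max_left _ _)
    calc ‖u k‖ = Real.sqrt (‖u k‖^2) := (Real.sqrt_sq (norm_nonneg _)).symm
      _ ≤ Real.sqrt S := Real.sqrt_le_sqrt this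
  · have : ‖v k‖^2 ≤ S := le_trans (hvM k) (le_max_right _ _)
    calc ‖v k‖ = Real.sqrt (‖v k‖^2) := (Real.sqrt_sq (norm_nonneg _)).symm
      _ ≤ Real.sqrt S := Real.sqrt_le_sqrt this
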